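/- Suppose N : V → V' satisfies Assumption (N) with data (C_N, n, (ζ₁ⱼ), (ζ₂ⱼ), (δ₁ⱼ), (δ₂ⱼ)), and set ‖δ₂‖ := max_{1≤j≤n} δ₂ⱼ. Then there exists a constant C̄ > 0, depending only on n, C_N and 1/(1 − ‖δ₂‖), such that for every γ > 0 and all y₁, y₂ ∈ V: 2·⟨N(y₁) − N(y₂), y₁ − y₂⟩ ≤ γ·‖y₁ − y₂‖_V² + (1 + γ^{-(1+‖δ₂‖)/(1−‖δ₂‖)})·C̄·Σ_{j=1}^{n} ( ‖y₁‖_H^{2ζ₁ⱼ/(1−δ₂ⱼ)} ‖y₁‖_V^{2ζ₂ⱼ/(1−δ₂ⱼ)} + ‖y₂‖_H^{2ζ₁ⱼ/(1−δ₂ⱼ)} ‖y₂‖_V^{2ζ₂ⱼ/(1−δ₂ⱼ)} )·‖y₁ − y₂‖_H^{2δ₁ⱼ/(1−δ₂ⱼ)}. (Lemma 3.3 of the paper.) -/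

import Mathlib

open scoped RealInnerProductSpace

lemma aux_young {X Y ε p q : ℝ} (hX : 0 ≤ X) (hY : 0 ≤ Y) (hε : 0 < ε)
    (hpq : Real.HolderConjugate p q) :
    X * Y ≤ ε * X ^ p + ε ^ (-(q / p)) * Y ^ q := by
  have hεp : (0:ℝ) ≤ ε ^ (p⁻¹:ℝ) := Real.rpow_nonneg hε.le _
  have hεp' : (0:ℝ) ≤ ε ^ (-(p⁻¹:ℝ)) := Real.rpow_nonneg hε.le _
  have key := Real.young_inequality_of_nonneg (mul_nonneg hεp hX) (mul_nonneg hεp' hY) hpq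
  have h1 : ε ^ (p⁻¹:ℝ) * X * (ε ^ (-(p⁻¹:ℝ)) * Y) = X * Y := by
    rw [mul_mul_mul_comm, ← Real.rpow_add hε]
    simp
  have h2 : (ε ^ (p⁻¹:ℝ) * X) ^ p = ε * X ^ p := by
    rw [Real.mul_rpow hεp hX, ← Real.rpow_mul hε.le, inv_mul_cancel₀ hpq.ne_zero,
      Real.rpow_one]
  have h3 : (ε ^ (-(p⁻¹:ℝ)) * Y) ^ q = ε ^ (-(q / p)) * Y ^ q := by
    rw [Real.mul_rpow hεp' hY, ← Real.rpow_mul hε.le]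
    congr 2
    field_simp
  rw [h1, h2, h3] at key
  have d1 : ε * X ^ p / p ≤ ε * X ^ p :=
    div_le_self (mul_nonneg hε.le (Real.rpow_nonneg hX p)) hpq.lt.le
  have d2 : ε ^ (-(q / p)) * Y ^ q / q ≤ ε ^ (-(q / p)) * Y ^ q :=
    div_le_self (mul_nonneg (Real.rpow_nonneg hε.le _) (Real.rpow_nonneg hY q))
      hpq.symm.lt.le
  linarith

lemma aux_gamma {γ m M : ℝ} (hγ : 0 < γ) (hm : 0 ≤ m) (hmM : m ≤ M) :
    γ ^ (-m) ≤ 1 + γ ^ (-M) := by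
  rcases le_or_gt 1 γ with h | h
  · have h1 : γ ^ (-m) ≤ 1 := Real.rpow_le_one_of_one_le_of_nonpos h (neg_nonpos.mpr hm)
    have h2 : 0 ≤ γ ^ (-M) := Real.rpow_nonneg hγ.le _
    linarith
  · have h1 : γ ^ (-m) ≤ γ ^ (-M) :=
      Real.rpow_le_rpow_of_exponent_ge hγ h.le (by linarith)
    linarith

lemma aux_base {b q Q : ℝ} (hb : 0 ≤ b) (hq : 0 ≤ q) (hqQ : q ≤ Q) :
    b ^ q ≤ (1 + b) ^ Q := by
  have h1 : b ^ q ≤ (1 + b) ^ q := Real.rpow_le_rpow hb (by linarith) hq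
  have h2 : (1 + b) ^ q ≤ (1 + b) ^ Q :=
    Real.rpow_le_rpow_of_exponent_le (by linarith) hqQ
  linarith

lemma aux_add {u v q Q : ℝ} (hu : 0 ≤ u) (hv : 0 ≤ v) (hq : 0 ≤ q) (hqQ : q ≤ Q) :
    (u + v) ^ q ≤ 2 ^ Q * (u ^ q + v ^ q) := by
  have h2q : (2:ℝ) ^ q ≤ 2 ^ Q := Real.rpow_le_rpow_of_exponent_le one_le_two hqQ
  have h2q0 : (0:ℝ) ≤ 2 ^ q := Real.rpow_nonneg (by norm_num) q
  have huq : 0 ≤ u ^ q := Real.rpow_nonneg hu q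
  have hvq : 0 ≤ v ^ q := Real.rpow_nonneg hv q
  rcases le_total u v with h | h
  · have h1 : (u + v) ^ q ≤ (2 * v) ^ q :=
      Real.rpow_le_rpow (by linarith) (by linarith) hq
    rw [Real.mul_rpow (by norm_num) hv] at h1
    nlinarith
  · have h1 : (u + v) ^ q ≤ (2 * u) ^ q :=
      Real.rpow_le_rpow (by linarith) (by linarith) hq
    rw [Real.mul_rpow (by norm_num) hu] at h1
    nlinarith


set_option maxHeartbeats 1000000 in
/-- Lemma 3.3: estimate for the nonlinearity satisfying Assumption (N). -/
theorem stmt1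
    {H V : Type*}
    [NormedAddCommGroup H] [InnerProductSpace ℝ H] [CompleteSpace H]
    [NormedAddCommGroup V] [InnerProductSpace ℝ V] [CompleteSpace V]
    (ι : V →L[ℝ] H) (hι : Function.Injective ι) (hdense : DenseRange ι)
    (N : V → (V →L[ℝ] ℝ))
    (CN : ℝ) (hCN : 0 ≤ CN) (n : ℕ) (hn : 1 ≤ n)
    (ζ₁ ζ₂ δ₁ δ₂ : Fin n → ℝ)
    (hζ₁ : ∀ k, 0 ≤ ζ₁ k) (hζ₂ : ∀ k, 0 ≤ ζ₂ k)
    (hδ₁ : ∀ k, 0 ≤ δ₁ k) (hδ₂ : ∀ k, 0 ≤ δ₂ k)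
    (hlt : ∀ k, ζ₂ k + δ₂ k < 1) (hge : ∀ k, 1 ≤ δ₁ k + δ₂ k)
    (hN : ∀ y₁ y₂ : V,
      ‖N y₁ - N y₂‖ ≤ CN * ∑ k : Fin n,
        (‖ι y₁‖ ^ ζ₁ k * ‖y₁‖ ^ ζ₂ k + ‖ι y₂‖ ^ ζ₁ k * ‖y₂‖ ^ ζ₂ k) *
          (‖ι (y₁ - y₂)‖ ^ δ₁ k * ‖y₁ - y₂‖ ^ δ₂ k)) :
    ∃ Cb : ℝ, 0 < Cb ∧ ∀ γ : ℝ, 0 < γ → ∀ y₁ y₂ : V,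
      2 * (N y₁ - N y₂) (y₁ - y₂)
        ≤ γ * ‖y₁ - y₂‖ ^ 2
          + (1 + γ ^ (-(1 + ⨆ k, δ₂ k) / (1 - ⨆ k, δ₂ k))) * Cb *
            ∑ k : Fin n,
              (‖ι y₁‖ ^ (2 * ζ₁ k / (1 - δ₂ k)) * ‖y₁‖ ^ (2 * ζ₂ k / (1 - δ₂ k))
                + ‖ι y₂‖ ^ (2 * ζ₁ k / (1 - δ₂ k)) * ‖y₂‖ ^ (2 * ζ₂ k / (1 - δ₂ k))) *
              ‖ι (y₁ - y₂)‖ ^ (2 * δ₁ k / (1 - δ₂ k)) := by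
  classical
  have hnpos : 0 < n := hn
  haveI : Nonempty (Fin n) := ⟨⟨0, hnpos⟩⟩
  obtain ⟨k₀, hk₀⟩ := Finite.exists_max δ₂
  set S := ⨆ k, δ₂ k with hSdef
  have hbdd : BddAbove (Set.range δ₂) := Finite.bddAbove_range _
  have hleS : ∀ k, δ₂ k ≤ S := fun k => le_ciSup hbdd k
  have hS0 : 0 ≤ S := le_trans (hδ₂ k₀) (hleS k₀)
  have hS1 : S < 1 := by
    refine lt_of_le_of_lt (ciSup_le fun k => hk₀ k) ?_
    have := hlt k₀; have := hζ₂ k₀; linarith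
  have h1S : 0 < 1 - S := by linarith
  set M := (1 + S) / (1 - S) with hMdef
  set Q := (2 : ℝ) / (1 - S) with hQdef
  have hM1 : 1 ≤ M := by rw [hMdef, le_div_iff₀ h1S]; linarith
  have hM0 : 0 ≤ M := by linarith
  have hQ0 : 0 < Q := by rw [hQdef]; positivity
  have hncast : (0:ℝ) < (n:ℝ) := by exact_mod_cast hnpos
  have hCb1 : (0:ℝ) < (n:ℝ) ^ M := Real.rpow_pos_of_pos hncast M
  have hCb2 : (0:ℝ) < (1 + 2*CN) ^ Q := Real.rpow_pos_of_pos (by linarith) Q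
  have hCb3 : (0:ℝ) < (2:ℝ) ^ Q := Real.rpow_pos_of_pos (by norm_num) Q
  refine ⟨(n:ℝ) ^ M * (1 + 2*CN) ^ Q * 2 ^ Q, by positivity, ?_⟩
  intro γ hγ y₁ y₂
  set Cb := (n:ℝ) ^ M * (1 + 2*CN) ^ Q * 2 ^ Q with hCbdef
  have hCb : 0 < Cb := by positivity
  set e := y₁ - y₂ with he
  have hexp : -(1 + S) / (1 - S) = -M := by rw [hMdef]; ring
  rw [hexp]
  -- abbreviations
  set A : Fin n → ℝ := fun k => ‖ι y₁‖ ^ ζ₁ k * ‖y₁‖ ^ ζ₂ k + ‖ι y₂‖ ^ ζ₁ k * ‖y₂‖ ^ ζ₂ k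
    with hAdef
  set B : Fin n → ℝ := fun k =>
    (‖ι y₁‖ ^ (2 * ζ₁ k / (1 - δ₂ k)) * ‖y₁‖ ^ (2 * ζ₂ k / (1 - δ₂ k))
      + ‖ι y₂‖ ^ (2 * ζ₁ k / (1 - δ₂ k)) * ‖y₂‖ ^ (2 * ζ₂ k / (1 - δ₂ k))) *
      ‖ι e‖ ^ (2 * δ₁ k / (1 - δ₂ k)) with hBdef
  have hA0 : ∀ k, 0 ≤ A k := by intro k; rw [hAdef]; positivity
  -- step 1
  have hγM0 : 0 ≤ γ ^ (-M) := Real.rpow_nonneg hγ.le _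
  have step1 : 2 * (N y₁ - N y₂) e ≤
      ∑ k : Fin n, 2 * CN * (A k * (‖ι e‖ ^ δ₁ k * ‖e‖ ^ δ₂ k)) * ‖e‖ := by
    have hop : (N y₁ - N y₂) e ≤ ‖N y₁ - N y₂‖ * ‖e‖ := by
      refine le_trans (le_abs_self _) ?_
      rw [← Real.norm_eq_abs]
      exact (N y₁ - N y₂).le_opNorm e
    have h2 := hN y₁ y₂
    rw [← he] at h2
    calc 2 * (N y₁ - N y₂) e ≤ 2 * (‖N y₁ - N y₂‖ * ‖e‖) := by linarith
      _ ≤ 2 * ((CN * ∑ k : Fin n, A k * (‖ι e‖ ^ δ₁ k * ‖e‖ ^ δ₂ k)) * ‖e‖) := by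
          have := mul_le_mul_of_nonneg_right h2 (norm_nonneg e)
          linarith
      _ = ∑ k : Fin n, 2 * CN * (A k * (‖ι e‖ ^ δ₁ k * ‖e‖ ^ δ₂ k)) * ‖e‖ := by
          rw [Finset.mul_sum, Finset.sum_mul, Finset.mul_sum]
          exact Finset.sum_congr rfl fun k _ => by ring
  -- step 2 : per-index bound
  have step2 : ∀ k : Fin n,
      2 * CN * (A k * (‖ι e‖ ^ δ₁ k * ‖e‖ ^ δ₂ k)) * ‖e‖ ≤
        γ / n * ‖e‖ ^ 2 + (1 + γ ^ (-M)) * Cb * B k := by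
    intro k
    set d := δ₂ k with hddef
    have hd0 : 0 ≤ d := hδ₂ k
    have hd1 : d < 1 := by have := hlt k; have := hζ₂ k; linarith
    have h1d : 0 < 1 - d := by linarith
    have h1d' : 0 < 1 + d := by linarith
    set p := (2:ℝ) / (1 + d) with hpdef
    set q := (2:ℝ) / (1 - d) with hqdef
    have hq0 : 0 ≤ q := by rw [hqdef]; positivity
    have hpq : p.HolderConjugate q := by
      rw [Real.holderConjugate_iff]
      constructor
      · rw [hpdef, lt_div_iff₀ h1d']; linarith
      · rw [hpdef, hqdef, inv_div, inv_div]; ring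
    have hdS : d ≤ S := by rw [hddef]; exact hleS k
    have hqQ : q ≤ Q := by
      rw [hqdef, hQdef, div_le_div_iff₀ h1d h1S]; linarith
    set m := (1 + d) / (1 - d) with hmdef
    have hm0 : 0 ≤ m := by rw [hmdef]; positivity
    have hmM : m ≤ M := by
      rw [hmdef, hMdef, div_le_div_iff₀ h1d h1S]
      nlinarith [hdS]
    have hqp : q / p = m := by
      rw [hpdef, hqdef, hmdef]
      field_simp
    -- Young
    have hsplit : ‖e‖ ^ (d + 1) = ‖e‖ ^ d * ‖e‖ := by
      rw [Real.rpow_add' (norm_nonneg _) (by linarith : d + 1 ≠ 0), Real.rpow_one]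
    have hY0 : 0 ≤ 2 * CN * A k * ‖ι e‖ ^ δ₁ k := by
      have := hA0 k
      positivity
    have young := aux_young (X := ‖e‖ ^ (d + 1)) (Y := 2 * CN * A k * ‖ι e‖ ^ δ₁ k)
      (ε := γ / n) (Real.rpow_nonneg (norm_nonneg _) _) hY0 (by positivity) hpq
    have hXp : (‖e‖ ^ (d + 1)) ^ p = ‖e‖ ^ 2 := by
      rw [← Real.rpow_natCast ‖e‖ 2, ← Real.rpow_mul (norm_nonneg _)]
      congr 1
      rw [hpdef]
      field_simp
      ring
    have hYq : (2 * CN * A k * ‖ι e‖ ^ δ₁ k) ^ q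
        = (2 * CN) ^ q * ((A k) ^ q * ‖ι e‖ ^ (δ₁ k * q)) := by
      rw [Real.mul_rpow (by positivity) (Real.rpow_nonneg (norm_nonneg _) _),
        Real.mul_rpow (by positivity) (hA0 k), ← Real.rpow_mul (norm_nonneg _)]
      ring
    have hεq : (γ / n) ^ (-(q / p)) = γ ^ (-m) * (n:ℝ) ^ m := by
      rw [hqp, Real.div_rpow hγ.le (Nat.cast_nonneg n), Real.rpow_neg (Nat.cast_nonneg n),
        div_eq_mul_inv, inv_inv]
    rw [hXp, hYq, hεq] at young
    -- bound the second Young term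
    have hAq : (A k) ^ q * ‖ι e‖ ^ (δ₁ k * q) ≤ 2 ^ Q * B k := by
      have hu : (‖ι y₁‖ ^ ζ₁ k * ‖y₁‖ ^ ζ₂ k) ^ q
          = ‖ι y₁‖ ^ (2 * ζ₁ k / (1 - δ₂ k)) * ‖y₁‖ ^ (2 * ζ₂ k / (1 - δ₂ k)) := by
        rw [Real.mul_rpow (Real.rpow_nonneg (norm_nonneg _) _)
            (Real.rpow_nonneg (norm_nonneg _) _),
          ← Real.rpow_mul (norm_nonneg _), ← Real.rpow_mul (norm_nonneg _)]
        rw [← hddef, hqdef]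
        congr 1 <;> [skip; congr 1] <;> ring
      have hv : (‖ι y₂‖ ^ ζ₁ k * ‖y₂‖ ^ ζ₂ k) ^ q
          = ‖ι y₂‖ ^ (2 * ζ₁ k / (1 - δ₂ k)) * ‖y₂‖ ^ (2 * ζ₂ k / (1 - δ₂ k)) := by
        rw [Real.mul_rpow (Real.rpow_nonneg (norm_nonneg _) _)
            (Real.rpow_nonneg (norm_nonneg _) _),
          ← Real.rpow_mul (norm_nonneg _), ← Real.rpow_mul (norm_nonneg _)]
        rw [← hddef, hqdef]
        congr 1 <;> [skip; congr 1] <;> ring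
      have hw : ‖ι e‖ ^ (δ₁ k * q) = ‖ι e‖ ^ (2 * δ₁ k / (1 - δ₂ k)) := by
        rw [← hddef, hqdef]
        congr 1
        ring
      have hadd := aux_add (u := ‖ι y₁‖ ^ ζ₁ k * ‖y₁‖ ^ ζ₂ k)
        (v := ‖ι y₂‖ ^ ζ₁ k * ‖y₂‖ ^ ζ₂ k) (by positivity) (by positivity) hq0 hqQ
      rw [hu, hv] at hadd
      calc (A k) ^ q * ‖ι e‖ ^ (δ₁ k * q)
          ≤ (2 ^ Q * (‖ι y₁‖ ^ (2 * ζ₁ k / (1 - δ₂ k)) * ‖y₁‖ ^ (2 * ζ₂ k / (1 - δ₂ k))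
              + ‖ι y₂‖ ^ (2 * ζ₁ k / (1 - δ₂ k)) * ‖y₂‖ ^ (2 * ζ₂ k / (1 - δ₂ k)))) *
              ‖ι e‖ ^ (δ₁ k * q) := by
            refine mul_le_mul_of_nonneg_right ?_ (Real.rpow_nonneg (norm_nonneg _) _)
            rw [hAdef]
            exact hadd
        _ = 2 ^ Q * B k := by rw [hw, hBdef]; ring
    have hB0 : 0 ≤ B k := by rw [hBdef]; positivity
    have hmono : γ ^ (-m) * (n:ℝ) ^ m * ((2 * CN) ^ q * ((A k) ^ q * ‖ι e‖ ^ (δ₁ k * q)))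
        ≤ (1 + γ ^ (-M)) * (n:ℝ) ^ M * ((1 + 2 * CN) ^ Q * (2 ^ Q * B k)) := by
      have hg1 : γ ^ (-m) ≤ 1 + γ ^ (-M) := aux_gamma hγ hm0 hmM
      have hg2 : (n:ℝ) ^ m ≤ (n:ℝ) ^ M :=
        Real.rpow_le_rpow_of_exponent_le (by exact_mod_cast hn) hmM
      have hg3 : (2 * CN) ^ q ≤ (1 + 2 * CN) ^ Q := aux_base (by linarith) hq0 hqQ
      have h01 : 0 ≤ γ ^ (-m) := Real.rpow_nonneg hγ.le _
      have h02 : 0 ≤ (n:ℝ) ^ m := Real.rpow_nonneg (Nat.cast_nonneg n) _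
      have h03 : 0 ≤ (2 * CN) ^ q := Real.rpow_nonneg (by linarith) _
      have h04 : 0 ≤ (A k) ^ q * ‖ι e‖ ^ (δ₁ k * q) :=
        mul_nonneg (Real.rpow_nonneg (hA0 k) _) (Real.rpow_nonneg (norm_nonneg _) _)
      have h05 : 0 ≤ 2 ^ Q * B k := mul_nonneg hCb3.le hB0
      have h06 : 0 ≤ (1 + 2 * CN) ^ Q := hCb2.le
      have h07 : 0 ≤ (1 + γ ^ (-M)) := by linarith
      have h08 : 0 ≤ (n:ℝ) ^ M := hCb1.le
      exact mul_le_mul (mul_le_mul hg1 hg2 h02 h07)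
        (mul_le_mul hg3 hAq h04 h06) (mul_nonneg h03 h04) (mul_nonneg h07 h08)
    calc 2 * CN * (A k * (‖ι e‖ ^ δ₁ k * ‖e‖ ^ d)) * ‖e‖
        = ‖e‖ ^ (d + 1) * (2 * CN * A k * ‖ι e‖ ^ δ₁ k) := by rw [hsplit]; ring
      _ ≤ γ / n * ‖e‖ ^ 2 + γ ^ (-m) * (n:ℝ) ^ m *
            ((2 * CN) ^ q * ((A k) ^ q * ‖ι e‖ ^ (δ₁ k * q))) := young
      _ ≤ γ / n * ‖e‖ ^ 2 + (1 + γ ^ (-M)) * (n:ℝ) ^ M *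
            ((1 + 2 * CN) ^ Q * (2 ^ Q * B k)) := by linarith
      _ = γ / n * ‖e‖ ^ 2 + (1 + γ ^ (-M)) * Cb * B k := by rw [hCbdef]; ring
  -- combine
  have hsum := Finset.sum_le_sum (fun k (_ : k ∈ Finset.univ) => step2 k)
  have htotal : ∑ k : Fin n, (γ / n * ‖e‖ ^ 2 + (1 + γ ^ (-M)) * Cb * B k)
      = γ * ‖e‖ ^ 2 + (1 + γ ^ (-M)) * Cb * ∑ k : Fin n, B k := by
    rw [Finset.sum_add_distrib, Finset.sum_const, Finset.card_univ, Fintype.card_fin,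
      ← Finset.mul_sum, nsmul_eq_mul]
    have hne : (n:ℝ) ≠ 0 := hncast.ne'
    field_simp
  calc 2 * (N y₁ - N y₂) e
      ≤ ∑ k : Fin n, 2 * CN * (A k * (‖ι e‖ ^ δ₁ k * ‖e‖ ^ δ₂ k)) * ‖e‖ := step1
    _ ≤ ∑ k : Fin n, (γ / n * ‖e‖ ^ 2 + (1 + γ ^ (-M)) * Cb * B k) := hsum
    _ = γ * ‖e‖ ^ 2 + (1 + γ ^ (-M)) * Cb * ∑ k : Fin n, B k := htotal
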